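/- Suppose k ≥ 1, v ≥ 1 and n ≥ v(k−1). Then the following identity of polynomials in x holds: Y_{n,β}^{(v)}(x;k,a,b) = (−1)^v·((n)_{v(k−1)}/(2^{kv}·a^{bv}))·𝒢_{n−v(k−1)}^{(v)}(x, −β^b/a^b), where 𝒢^{(v)} denotes the Apostol–Genocchi polynomials of order v (the paper writes the prefactor as −1, which agrees with (−1)^v when v is odd). -/

import Mathlib

open Polynomial

/-- The exponential generating series `e^{xt} = ∑_{n≥0} xⁿ tⁿ/n!` as a formal power series
in `t` with coefficients in `ℂ[x]`. -/
noncomputable def expX : PowerSeries (Polynomial ℂ) :=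
  PowerSeries.mk fun n => (n.factorial : ℂ)⁻¹ • (Polynomial.X : Polynomial ℂ) ^ n

/-- The exponential generating series `∑_{n≥0} Y_n tⁿ/n!` of a family of polynomials. -/
noncomputable def egf (Y : ℕ → Polynomial ℂ) : PowerSeries (Polynomial ℂ) :=
  PowerSeries.mk fun n => (n.factorial : ℂ)⁻¹ • Y n

/-- The defining identity for the unified Apostol-type polynomials with general constants:
`(B·e^t − A)^v · ∑_{n≥0} Y_n tⁿ/n! = (2^{1−k} t^k)^v · e^{xt}` as formal power series in `t`
over `ℂ[x]`. -/
def ApostolFamilyC (k v : ℕ) (B A : ℂ) (Y : ℕ → Polynomial ℂ) : Prop :=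
  (PowerSeries.C (R := Polynomial ℂ) (Polynomial.C B) * PowerSeries.exp (Polynomial ℂ)
      - PowerSeries.C (R := Polynomial ℂ) (Polynomial.C A)) ^ v * egf Y
    = (PowerSeries.C (R := Polynomial ℂ) (Polynomial.C ((2 : ℂ) ^ ((1 : ℤ) - (k : ℤ)))) *
        PowerSeries.X ^ k) ^ v * expX

/-- `Y` is the family of unified Apostol-type polynomials `Y_{n,β}^{(v)}(x;k,a,b)`:
here `β^b = exp(b·Log β)` is the principal complex power and `a^b` the real power. -/
def ApostolFamily (k v : ℕ) (a b : ℝ) (β : ℂ) (Y : ℕ → Polynomial ℂ) : Prop :=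
  ApostolFamilyC k v (β ^ (b : ℂ)) (((a ^ b : ℝ) : ℂ)) Y

/-- The defining identity for the Apostol–Genocchi polynomials of order `v`:
`(λ·e^t + 1)^v · ∑_{n≥0} 𝒢_n^{(v)}(x,λ) tⁿ/n! = (2t)^v·e^{xt}`. -/
def ApostolGenocchiFamily (v : ℕ) (lam : ℂ) (G : ℕ → Polynomial ℂ) : Prop :=
  (PowerSeries.C (R := Polynomial ℂ) (Polynomial.C lam) * PowerSeries.exp (Polynomial ℂ) + 1) ^ v *
      egf G
    = (PowerSeries.C (R := Polynomial ℂ) (Polynomial.C (2 : ℂ)) * PowerSeries.X) ^ v * expX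

/-- For `k ≥ 1`, `v ≥ 1` and `n ≥ v(k−1)`:
`Y_{n,β}^{(v)}(x;k,a,b) = (−1)^v ((n)_{v(k−1)}/(2^{kv} a^{bv})) 𝒢_{n−v(k−1)}^{(v)}(x, −β^b/a^b)`. -/

noncomputable def CCh : ℂ →+* PowerSeries (Polynomial ℂ) :=
  (PowerSeries.C (R := Polynomial ℂ)).comp (Polynomial.C : ℂ →+* Polynomial ℂ)

lemma CCh_apply (z : ℂ) : CCh z = PowerSeries.C (R := Polynomial ℂ) (Polynomial.C z) := rfl

theorem apostol_eq_apostolGenocchi (k v : ℕ) (a b : ℝ) (β : ℂ)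
    (ha : 0 < a) (hb : 0 < b) (hβ : β ≠ 0) (hk : 1 ≤ k) (hv : 1 ≤ v)
    (Y G : ℕ → Polynomial ℂ)
    (hY : ApostolFamily k v a b β Y)
    (hG : ApostolGenocchiFamily v (-(β ^ (b : ℂ) / ((a ^ b : ℝ) : ℂ))) G)
    (n : ℕ) (hn : v * (k - 1) ≤ n) :
    Y n = Polynomial.C ((-1 : ℂ) ^ v * (n.descFactorial (v * (k - 1)) : ℂ) /
        ((2 : ℂ) ^ (k * v) * ((a ^ b : ℝ) : ℂ) ^ v)) * G (n - v * (k - 1)) := by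
  classical
  set A : ℂ := ((a ^ b : ℝ) : ℂ) with hAdef
  set B : ℂ := β ^ (b : ℂ) with hBdef
  have hA : A ≠ 0 := by
    simp only [hAdef, ne_eq, Complex.ofReal_eq_zero]
    exact ne_of_gt (Real.rpow_pos_of_pos ha b)
  have hB : B ≠ 0 := by
    simp only [hBdef, ne_eq, Complex.cpow_eq_zero_iff]
    tauto
  set lam : ℂ := -(B / A) with hlamdef
  have hlam : lam ≠ 0 := by
    simp [hlamdef, _root_.div_eq_zero_iff, hA, hB]
  set m : ℕ := v * (k - 1) with hmdef
  set c1 : ℂ := (2 : ℂ) ^ ((1 : ℤ) - (k : ℤ)) with hc1def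
  set E := PowerSeries.exp (Polynomial ℂ) with hE
  set L := CCh lam * E + 1 with hL
  replace hY : (CCh B * E - CCh A) ^ v * egf Y
      = (CCh c1 * PowerSeries.X ^ k) ^ v * expX := hY
  replace hG : L ^ v * egf G = (CCh 2 * PowerSeries.X) ^ v * expX := hG
  have hm : k * v = m + v := by
    obtain ⟨k', rfl⟩ : ∃ k', k = k' + 1 := ⟨k - 1, (Nat.succ_pred_eq_of_pos hk).symm⟩
    simp only [hmdef, Nat.add_sub_cancel]
    ring
  have h1 : CCh B * E - CCh A = CCh (-A) * L := by
    have hBA : B = -A * lam := by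
      rw [hlamdef]
      field_simp
    rw [hL, hBA, map_mul, map_neg]
    ring
  have key : L ^ v * (CCh ((-A) ^ v * 2 ^ v) * egf Y)
      = L ^ v * (CCh (c1 ^ v) * (PowerSeries.X ^ m * egf G)) := by
    have e1 : L ^ v * (CCh ((-A) ^ v * 2 ^ v) * egf Y)
        = CCh (2 ^ v) * ((CCh B * E - CCh A) ^ v * egf Y) := by
      rw [h1]
      simp only [mul_pow, map_mul, map_pow]
      ring
    have e2 : L ^ v * (CCh (c1 ^ v) * (PowerSeries.X ^ m * egf G))
        = CCh (c1 ^ v) * PowerSeries.X ^ m * (L ^ v * egf G) := by ring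
    rw [e1, hY, e2, hG, mul_pow, mul_pow, ← pow_mul, ← map_pow, ← map_pow, hm, pow_add]
    ring
  have hLne : L ≠ 0 := by
    intro h
    have h2 := congrArg (PowerSeries.coeff (R := Polynomial ℂ) 1) h
    rw [hL, CCh_apply] at h2
    rw [hE] at h2
    simp [PowerSeries.coeff_exp, Polynomial.C_eq_zero, hlam] at h2
  have hfinal := mul_left_cancel₀ (pow_ne_zero v hLne) key
  have hco := congrArg (PowerSeries.coeff (R := Polynomial ℂ) n) hfinal
  rw [CCh_apply, CCh_apply, PowerSeries.coeff_C_mul, PowerSeries.coeff_C_mul,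
    PowerSeries.coeff_X_pow_mul', if_pos hn] at hco
  simp only [egf, PowerSeries.coeff_mk] at hco
  rw [Polynomial.smul_eq_C_mul, Polynomial.smul_eq_C_mul, ← mul_assoc, ← mul_assoc,
    ← Polynomial.C_mul, ← Polynomial.C_mul] at hco
  -- hco : C ((-A)^v * 2^v * (n!)⁻¹) * Y n = C (c1^v * ((n-m)!)⁻¹) * G (n - m)
  have hdesc : ((n - m).factorial : ℂ) * (n.descFactorial m : ℂ) = (n.factorial : ℂ) := by
    exact_mod_cast congrArg (Nat.cast : ℕ → ℂ) (Nat.factorial_mul_descFactorial hn)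
  have hc1 : c1 = 2 / 2 ^ k := by
    rw [hc1def, zpow_sub₀ (two_ne_zero), zpow_one, zpow_natCast]
  have hfac : ((n - m).factorial : ℂ) ≠ 0 := Nat.cast_ne_zero.mpr (n - m).factorial_ne_zero
  have hnfac : ((n.factorial : ℂ)) ≠ 0 := Nat.cast_ne_zero.mpr n.factorial_ne_zero
  have hu : ((-A) ^ v * 2 ^ v * ((n.factorial : ℂ))⁻¹) ≠ 0 := by
    apply mul_ne_zero (mul_ne_zero (pow_ne_zero _ (neg_ne_zero.mpr hA)) (pow_ne_zero _ two_ne_zero))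
    exact inv_ne_zero hnfac
  refine mul_left_cancel₀
    (show (Polynomial.C ((-A) ^ v * 2 ^ v * ((n.factorial : ℂ))⁻¹) : Polynomial ℂ) ≠ 0 from by
      simpa using hu) ?_
  rw [hco, ← mul_assoc, ← Polynomial.C_mul]
  congr 1
  rw [Polynomial.C_inj]
  rw [hc1, ← hdesc]
  field_simp
  ring_nf
  simp only [pow_mul', neg_one_sq, one_pow, mul_one, one_mul]
  have hdne : (n.descFactorial m : ℂ) ≠ 0 := by
    intro h0
    rw [h0, mul_zero] at hdesc
    exact hnfac hdesc.symm
  field_simp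
  rw [← mul_pow, ← mul_pow]
  norm_num
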